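/- Suppose subsets A_m ⊆ P_m^M for 0 ≤ m ≤ ⌊|M|/2⌋ satisfy #A_m = p_m − p_{m−1} and, for every n with 2n ≤ |M|, the family ⋃_{0 ≤ m ≤ n} { (U_M^{n−m}/(n−m)!)(f) : f ∈ A_m } is a ℤ-basis of ℤP_n^M. Then for every n' with |M|/2 ≤ n' ≤ |M|, the family B_{n'} = ⋃_{0 ≤ m ≤ |M|−n'} { (U_M^{n'−m}/(n'−m)!)(f) : f ∈ A_m } is a ℤ-basis of ℤP_{n'}^M. -/

import Mathlib

open Finset

/-- The rank-`n` elements of the product of chains of lengths `M 0, …, M (k-1)`: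
tuples `α` with `α i ≤ M i` for all `i` and `Σ α i = n`. -/
abbrev Pel {k : ℕ} (M : Fin k → ℕ) (n : ℕ) : Type :=
  {α : ∀ i, Fin (M i + 1) // ∑ i, (α i : ℕ) = n}

/-- `|M| = M 1 + ⋯ + M k`, the rank of the top element of the product of chains. -/
abbrev totalM {k : ℕ} (M : Fin k → ℕ) : ℕ := ∑ i, M i

/-- The matrix entry of `U_M^(n-m)/(n-m)!` at `(α, β)` for `α` of rank `m` and `β` of
rank `n`: it is `∏ i, choose (β i) (α i)`, which vanishes unless `α ≤ β`. -/
def uEntry {k : ℕ} (M : Fin k → ℕ) {m n : ℕ} (α : Pel M m) (β : Pel M n) : ℕ :=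
  ∏ i, Nat.choose (β.1 i : ℕ) (α.1 i : ℕ)

/-- `prevP M m = p_{m-1}`, the number of elements of rank `m - 1`, with `p_{-1} = 0`. -/
def prevP {k : ℕ} (M : Fin k → ℕ) : ℕ → ℕ
  | 0 => 0
  | m + 1 => Fintype.card (Pel M m)

/-- The rank-symmetry bijection `α ↦ M - α` from rank `n` to rank `|M| - n`. -/
def cmpl {k : ℕ} (M : Fin k → ℕ) {n : ℕ} (α : Pel M n) : Pel M (totalM M - n) :=
  ⟨fun i => ⟨M i - (α.1 i : ℕ), by omega⟩, by
    have h2 : ∀ i, (α.1 i : ℕ) ≤ M i := fun i => Nat.lt_succ_iff.mp (α.1 i).isLt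
    have key : ∑ i, (M i - (α.1 i : ℕ)) + ∑ i, (α.1 i : ℕ) = ∑ i, M i := by
      rw [← Finset.sum_add_distrib]
      exact Finset.sum_congr rfl fun i _ => Nat.sub_add_cancel (h2 i)
    have h := α.2
    show ∑ i, (M i - (α.1 i : ℕ)) = (∑ i, M i) - n
    omega⟩

/-- The family `B` of elements of `ℤP_n^M` consisting, for each `m ≤ mtop`, of the images
`U_M^(n-m)/(n-m)! f` of the elements `f ∈ A m` (expressed via the binomial matrix
entries of `U_M^(n-m)/(n-m)!`). -/
def bFam {k : ℕ} (M : Fin k → ℕ) (A : (m : ℕ) → Finset (Pel M m)) (mtop n : ℕ) :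
    ((m : Fin (mtop + 1)) × {f : Pel M (m : ℕ) // f ∈ A (m : ℕ)}) → (Pel M n → ℤ) :=
  fun x β => ((uEntry M x.2.1 β : ℕ) : ℤ)


namespace IBU

/-- trinomial revision -/
lemma tri (a d b : ℕ) :
    (a + d).choose a * b.choose (a + d) = b.choose a * (b - a).choose d := by
  rcases le_or_gt (a + d) b with h | h
  · have := Nat.choose_mul (n := b) (k := a + d) (s := a) (Nat.le_add_right a d)
    rw [Nat.add_sub_cancel_left] at this
    rw [mul_comm, this]
  · rw [Nat.choose_eq_zero_of_lt h, mul_zero]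
    rcases le_or_gt a b with h2 | h2
    · have : b - a < d := by omega
      rw [Nat.choose_eq_zero_of_lt this, mul_zero]
    · rw [Nat.choose_eq_zero_of_lt h2, zero_mul]

/-- multivariate Vandermonde over `piAntidiag` -/
lemma mv {ι : Type*} [DecidableEq ι] (s : Finset ι) (c : ι → ℕ) (r : ℕ) :
    ∑ δ ∈ Finset.piAntidiag s r, ∏ i ∈ s, (c i).choose (δ i)
      = (∑ i ∈ s, c i).choose r := by
  induction s using Finset.cons_induction generalizing r with
  | empty =>
    rcases Nat.eq_zero_or_pos r with rfl | hr
    · simp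
    · rw [Finset.piAntidiag_empty_of_ne_zero (by omega)]
      simp [Nat.choose_eq_zero_of_lt hr]
  | cons i s hi ih =>
    rw [Finset.piAntidiag_cons hi, Finset.sum_disjiUnion]
    rw [Finset.sum_cons, Nat.add_choose_eq]
    refine Finset.sum_congr rfl fun p hp => ?_
    rw [Finset.sum_map]
    have : ∀ δ ∈ Finset.piAntidiag s p.2,
        ∏ j ∈ cons i s hi, (c j).choose
          ((addRightEmbedding fun t => if t = i then p.1 else 0) δ j)
          = (c i).choose p.1 * ∏ j ∈ s, (c j).choose (δ j) := by
      intro δ hδ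
      rw [Finset.mem_piAntidiag] at hδ
      rw [Finset.prod_cons]
      have hδi : δ i = 0 := by
        by_contra hne
        exact hi (hδ.2 i hne)
      congr 1
      · simp [addRightEmbedding_apply, hδi]
      · refine Finset.prod_congr rfl fun j hj => ?_
        have : j ≠ i := fun hji => hi (hji ▸ hj)
        simp [addRightEmbedding_apply, this]
    rw [Finset.sum_congr rfl this, ← Finset.mul_sum, ih]


/-- (I1) alternating sums of binomials, truncated at any `N ≥ x`. -/
lemma alt (x N : ℕ) (h : x ≤ N) :
    ∑ t ∈ range (N + 1), (-1 : ℤ) ^ t * (x.choose t : ℤ)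
      = if x = 0 then 1 else 0 := by
  rw [← Int.alternating_sum_range_choose (n := x)]
  symm
  apply Finset.sum_subset
  · exact Finset.range_subset_range.2 (by omega)
  · intro t _ ht
    rw [Finset.mem_range, not_lt] at ht
    rw [Nat.choose_eq_zero_of_lt (by omega)]
    simp

/-- (I2) shift re-expansion. -/
lemma shift (x j : ℕ) (hx : 1 ≤ x) :
    ((x - 1).choose j : ℤ) = ∑ t ∈ range (j + 1), (-1 : ℤ) ^ (j - t) * (x.choose t : ℤ) := by
  induction j with
  | zero => simp
  | succ j ih =>
    rw [Finset.sum_range_succ]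
    have hsplit : ∀ t ∈ range (j + 1), (-1 : ℤ) ^ (j + 1 - t) * (x.choose t : ℤ)
        = -((-1 : ℤ) ^ (j - t) * (x.choose t : ℤ)) := by
      intro t ht
      rw [Finset.mem_range] at ht
      have : j + 1 - t = (j - t) + 1 := by omega
      rw [this, pow_succ]
      ring
    rw [Finset.sum_congr rfl hsplit, Finset.sum_neg_distrib, ← ih]
    have hp : (x - 1 + 1) = x := by omega
    have hps : x.choose (j+1) = (x-1).choose j + (x-1).choose (j+1) := by
      conv_lhs => rw [← hp]
      exact Nat.choose_succ_succ (x-1) j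
    rw [Nat.sub_self, pow_zero, one_mul]
    push_cast [hps]
    ring

/-- (I3) complement re-expansion. -/
lemma compl_expand : ∀ (γ Mi x : ℕ), γ ≤ Mi → x ≤ Mi →
    (((Mi - x).choose γ : ℕ) : ℤ)
      = ∑ t ∈ range (γ + 1), ((-1 : ℤ) ^ t * (((Mi - t).choose (γ - t) : ℕ) : ℤ))
          * ((x.choose t : ℕ) : ℤ) := by
  intro γ
  induction γ with
  | zero => intro Mi x _ _; simp
  | succ γ ihγ =>
    intro Mi x hγ hx
    induction x with
    | zero =>
      have hz : ∑ t ∈ range (γ + 1 + 1), ((-1 : ℤ) ^ t * (((Mi - t).choose (γ + 1 - t) : ℕ) : ℤ))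
            * ((Nat.choose 0 t : ℕ) : ℤ)
          = ((-1 : ℤ) ^ 0 * (((Mi - 0).choose (γ + 1 - 0) : ℕ) : ℤ))
            * ((Nat.choose 0 0 : ℕ) : ℤ) := by
        apply Finset.sum_eq_single
        · intro t _ ht
          have h0 : Nat.choose 0 t = 0 := Nat.choose_eq_zero_of_lt (by omega)
          rw [h0]; simp
        · intro h; exact absurd (Finset.mem_range.2 (by omega)) h
      rw [hz]; simp
    | succ x ihx =>
      have hx' : x ≤ Mi := by omega
      have hIH := ihx hx'
      have hstep : ∀ t ∈ range (γ + 1 + 1),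
          ((-1 : ℤ) ^ t * (((Mi - t).choose (γ + 1 - t) : ℕ) : ℤ)) * (((x+1).choose t : ℕ) : ℤ)
          = ((-1 : ℤ) ^ t * (((Mi - t).choose (γ + 1 - t) : ℕ) : ℤ)) * ((x.choose t : ℕ) : ℤ)
            + ((-1 : ℤ) ^ t * (((Mi - t).choose (γ + 1 - t) : ℕ) : ℤ))
              * ((((x+1).choose t : ℕ) : ℤ) - ((x.choose t : ℕ) : ℤ)) := by
        intro t _; ring
      rw [Finset.sum_congr rfl hstep, Finset.sum_add_distrib, ← hIH]
      have hS2 : ∑ t ∈ range (γ + 1 + 1),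
          ((-1 : ℤ) ^ t * (((Mi - t).choose (γ + 1 - t) : ℕ) : ℤ))
            * ((((x+1).choose t : ℕ) : ℤ) - ((x.choose t : ℕ) : ℤ))
          = -((((Mi - 1 - x).choose γ : ℕ) : ℤ)) := by
        rw [Finset.sum_range_succ']
        have h0 : ((-1 : ℤ) ^ 0 * (((Mi - 0).choose (γ + 1 - 0) : ℕ) : ℤ))
            * ((((x+1).choose 0 : ℕ) : ℤ) - ((x.choose 0 : ℕ) : ℤ)) = 0 := by simp
        rw [h0, add_zero]
        have hterm : ∀ t ∈ range (γ + 1),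
            ((-1 : ℤ) ^ (t+1) * (((Mi - (t+1)).choose (γ + 1 - (t+1)) : ℕ) : ℤ))
              * ((((x+1).choose (t+1) : ℕ) : ℤ) - ((x.choose (t+1) : ℕ) : ℤ))
            = -(((-1 : ℤ) ^ t * ((((Mi - 1) - t).choose (γ - t) : ℕ) : ℤ))
                * ((x.choose t : ℕ) : ℤ)) := by
          intro t ht
          have h1 : Mi - (t + 1) = (Mi - 1) - t := by omega
          have h2 : γ + 1 - (t + 1) = γ - t := by omega
          have h3 : (((x+1).choose (t+1) : ℕ) : ℤ) - ((x.choose (t+1) : ℕ) : ℤ)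
              = ((x.choose t : ℕ) : ℤ) := by
            have hcc := Nat.choose_succ_succ x t
            push_cast [hcc]; ring
          rw [h1, h2, h3, pow_succ]
          ring
        rw [Finset.sum_congr rfl hterm, Finset.sum_neg_distrib]
        rw [← ihγ (Mi - 1) x (by omega) (by omega)]
      rw [hS2]
      have hL : (((Mi - (x+1)).choose (γ+1) : ℕ) : ℤ)
          = (((Mi - x).choose (γ+1) : ℕ) : ℤ) - (((Mi - 1 - x).choose γ : ℕ) : ℤ) := by
        have h2 : Mi - 1 - x = Mi - (x + 1) := by omega
        have h1 : Mi - x = (Mi - (x+1)) + 1 := by omega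
        have hcc := Nat.choose_succ_succ (Mi - (x+1)) γ
        rw [h2, h1, hcc]
        push_cast; ring
      rw [hL]
      ring


variable {k : ℕ}

lemma pel_le {M : Fin k → ℕ} {n : ℕ} (β : Pel M n) (i : Fin k) : (β.1 i : ℕ) ≤ M i :=
  Nat.lt_succ_iff.mp (β.1 i).isLt

/-- sums over `Pel M j` versus sums over `piAntidiag univ j`. -/
lemma sum_pel_eq {M : Fin k → ℕ} {j : ℕ} (F : (Fin k → ℕ) → ℕ)
    (hF : ∀ s, (∃ i, M i < s i) → F s = 0) :
    ∑ γ : Pel M j, F (fun i => (γ.1 i : ℕ))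
      = ∑ s ∈ Finset.piAntidiag (univ : Finset (Fin k)) j, F s := by
  have h1 : ∑ s ∈ Finset.piAntidiag (univ : Finset (Fin k)) j, F s
      = ∑ s ∈ (Finset.piAntidiag (univ : Finset (Fin k)) j).filter
          (fun s => ∀ i, s i ≤ M i), F s := by
    symm
    apply Finset.sum_filter_of_ne
    intro s _ hs
    by_contra hc
    push_neg at hc
    obtain ⟨i, hi⟩ := hc
    exact hs (hF s ⟨i, hi⟩)
  rw [h1]
  refine Finset.sum_bij' (i := fun (γ : Pel M j) _ => fun i => (γ.1 i : ℕ))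
    (j := fun s hs => ⟨fun i => ⟨s i, Nat.lt_succ_of_le
        ((Finset.mem_filter.mp hs).2 i)⟩, by
      have := (Finset.mem_piAntidiag.mp (Finset.mem_filter.mp hs).1).1
      simpa using this⟩)
    ?_ ?_ ?_ ?_ ?_
  · intro γ _
    rw [Finset.mem_filter, Finset.mem_piAntidiag]
    exact ⟨⟨γ.2, fun i _ => Finset.mem_univ i⟩, fun i => pel_le γ i⟩
  · intro s hs; exact Finset.mem_univ _
  · intro γ _; exact Subtype.ext (funext fun i => Fin.ext rfl)
  · intro s hs; rfl
  · intro γ _; rfl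

/-- The key composition identity. -/
lemma key (M : Fin k → ℕ) {m j n' : ℕ} (hmj : m ≤ j) (α : Pel M m) (β : Pel M n') :
    ∑ γ : Pel M j, uEntry M α γ * uEntry M γ β
      = (n' - m).choose (j - m) * uEntry M α β := by
  have hconv : ∑ γ : Pel M j, uEntry M α γ * uEntry M γ β
      = ∑ s ∈ Finset.piAntidiag (univ : Finset (Fin k)) j,
          (∏ i, (s i).choose (α.1 i : ℕ)) * ∏ i, ((β.1 i : ℕ)).choose (s i) := by
    exact sum_pel_eq
      (fun s => (∏ i, (s i).choose (α.1 i : ℕ)) * ∏ i, ((β.1 i : ℕ)).choose (s i))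
      (by
        intro s ⟨i, hi⟩
        have h0 : ((β.1 i : ℕ)).choose (s i) = 0 :=
          Nat.choose_eq_zero_of_lt (lt_of_le_of_lt (pel_le β i) hi)
        rw [show (∏ i, ((β.1 i : ℕ)).choose (s i)) = 0 from
          Finset.prod_eq_zero (Finset.mem_univ i) h0, mul_zero])
  rw [hconv]
  by_cases hab : ∀ i, (α.1 i : ℕ) ≤ (β.1 i : ℕ)
  · have h2 : ∑ s ∈ Finset.piAntidiag (univ : Finset (Fin k)) j,
          (∏ i, (s i).choose (α.1 i : ℕ)) * ∏ i, ((β.1 i : ℕ)).choose (s i)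
        = ∑ s ∈ (Finset.piAntidiag (univ : Finset (Fin k)) j).filter
            (fun s => ∀ i, (α.1 i : ℕ) ≤ s i),
            (∏ i, (s i).choose (α.1 i : ℕ)) * ∏ i, ((β.1 i : ℕ)).choose (s i) := by
      symm
      apply Finset.sum_filter_of_ne
      intro s _ hs
      by_contra hc
      push_neg at hc
      obtain ⟨i, hi⟩ := hc
      have h0 : (s i).choose (α.1 i : ℕ) = 0 := Nat.choose_eq_zero_of_lt hi
      exact hs (by rw [Finset.prod_eq_zero (Finset.mem_univ i) h0, zero_mul])
    rw [h2]
    have hbij : ∑ s ∈ (Finset.piAntidiag (univ : Finset (Fin k)) j).filter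
          (fun s => ∀ i, (α.1 i : ℕ) ≤ s i),
          (∏ i, (s i).choose (α.1 i : ℕ)) * ∏ i, ((β.1 i : ℕ)).choose (s i)
        = ∑ δ ∈ Finset.piAntidiag (univ : Finset (Fin k)) (j - m),
            (∏ i, ((α.1 i : ℕ) + δ i).choose (α.1 i : ℕ))
              * ∏ i, ((β.1 i : ℕ)).choose ((α.1 i : ℕ) + δ i) := by
      refine Finset.sum_nbij' (i := fun s => fun i => s i - (α.1 i : ℕ))
        (j := fun δ => fun i => (α.1 i : ℕ) + δ i) ?_ ?_ ?_ ?_ ?_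
      · intro s hs
        rw [Finset.mem_filter, Finset.mem_piAntidiag] at hs
        rw [Finset.mem_piAntidiag]
        refine ⟨?_, fun i _ => Finset.mem_univ i⟩
        have hsub : ∑ i, (s i - (α.1 i : ℕ))
            = (∑ i, s i) - ∑ i, (α.1 i : ℕ) :=
          Finset.sum_tsub_distrib univ (fun i _ => hs.2 i)
        rw [hsub, hs.1.1, α.2]
      · intro δ hδ
        rw [Finset.mem_piAntidiag] at hδ
        rw [Finset.mem_filter, Finset.mem_piAntidiag]
        refine ⟨⟨?_, fun i _ => Finset.mem_univ i⟩, fun i => Nat.le_add_right _ _⟩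
        rw [Finset.sum_add_distrib, α.2, hδ.1]
        exact Nat.add_sub_cancel' hmj
      · intro s hs
        rw [Finset.mem_filter] at hs
        funext i
        show (α.1 i : ℕ) + (s i - (α.1 i : ℕ)) = s i
        exact Nat.add_sub_cancel' (hs.2 i)
      · intro δ _
        funext i
        show (α.1 i : ℕ) + δ i - (α.1 i : ℕ) = δ i
        exact Nat.add_sub_cancel_left _ _
      · intro s hs
        rw [Finset.mem_filter] at hs
        congr 1 <;> refine Finset.prod_congr rfl fun i _ => ?_ <;>
          rw [Nat.add_sub_cancel' (hs.2 i)]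
    rw [hbij]
    have hterm : ∀ δ ∈ Finset.piAntidiag (univ : Finset (Fin k)) (j - m),
        (∏ i, ((α.1 i : ℕ) + δ i).choose (α.1 i : ℕ))
          * ∏ i, ((β.1 i : ℕ)).choose ((α.1 i : ℕ) + δ i)
        = uEntry M α β * ∏ i, ((β.1 i : ℕ) - (α.1 i : ℕ)).choose (δ i) := by
      intro δ _
      rw [← Finset.prod_mul_distrib]
      have hpt : ∀ i ∈ (univ : Finset (Fin k)),
          ((α.1 i : ℕ) + δ i).choose (α.1 i : ℕ) * ((β.1 i : ℕ)).choose ((α.1 i : ℕ) + δ i)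
          = ((β.1 i : ℕ)).choose (α.1 i : ℕ)
            * ((β.1 i : ℕ) - (α.1 i : ℕ)).choose (δ i) := fun i _ => tri _ _ _
      rw [Finset.prod_congr rfl hpt, Finset.prod_mul_distrib]
      rfl
    rw [Finset.sum_congr rfl hterm, ← Finset.mul_sum, mv]
    have hsum : ∑ i, ((β.1 i : ℕ) - (α.1 i : ℕ)) = n' - m := by
      have hsub : ∑ i, ((β.1 i : ℕ) - (α.1 i : ℕ))
          = (∑ i, (β.1 i : ℕ)) - ∑ i, (α.1 i : ℕ) :=
        Finset.sum_tsub_distrib univ (fun i _ => hab i)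
      rw [hsub, α.2, β.2]
    rw [hsum, mul_comm]
  · push_neg at hab
    obtain ⟨i0, hi0⟩ := hab
    have hrhs : uEntry M α β = 0 := by
      rw [uEntry, Finset.prod_eq_zero (Finset.mem_univ i0) (Nat.choose_eq_zero_of_lt hi0)]
    rw [hrhs, mul_zero]
    refine Finset.sum_eq_zero fun s _ => ?_
    rcases le_or_gt (α.1 i0 : ℕ) (s i0) with h | h
    · have h0 : ((β.1 i0 : ℕ)).choose (s i0) = 0 :=
        Nat.choose_eq_zero_of_lt (lt_of_lt_of_le hi0 h)
      rw [show (∏ i, ((β.1 i : ℕ)).choose (s i)) = 0 from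
        Finset.prod_eq_zero (Finset.mem_univ i0) h0, mul_zero]
    · have h0 : (s i0).choose (α.1 i0 : ℕ) = 0 := Nat.choose_eq_zero_of_lt h
      rw [Finset.prod_eq_zero (Finset.mem_univ i0) h0, zero_mul]


/-! ### The generator framework -/

/-- The function `β ↦ ∏ i, C(β i, γ i)` on `Pel M n'`. -/
def gen (M : Fin k → ℕ) (n' : ℕ) (γ : Fin k → ℕ) : Pel M n' → ℤ :=
  fun β => ∏ i, ((Nat.choose (β.1 i : ℕ) (γ i) : ℕ) : ℤ)

/-- The span of the generators of total degree at most `d`. -/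
def Gen (M : Fin k → ℕ) (n' d : ℕ) : Submodule ℤ (Pel M n' → ℤ) :=
  Submodule.span ℤ {g | ∃ γ : Fin k → ℕ, (∑ i, γ i) ≤ d ∧ g = gen M n' γ}

lemma gen_mem {M : Fin k → ℕ} {n' d : ℕ} {γ : Fin k → ℕ} (h : ∑ i, γ i ≤ d) :
    gen M n' γ ∈ Gen M n' d :=
  Submodule.subset_span ⟨γ, h, rfl⟩

lemma Gen_mono {M : Fin k → ℕ} {n' : ℕ} {d d' : ℕ} (h : d ≤ d') :
    Gen M n' d ≤ Gen M n' d' :=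
  Submodule.span_mono (fun g hg => by
    obtain ⟨γ, hγ, hgen⟩ := hg
    exact ⟨γ, le_trans hγ h, hgen⟩)

lemma gen_zero_of_big {M : Fin k → ℕ} {n' : ℕ} {γ : Fin k → ℕ} (i0 : Fin k)
    (h : M i0 < γ i0) : gen M n' γ = 0 := by
  funext β
  have h0 : ((Nat.choose (β.1 i0 : ℕ) (γ i0) : ℕ) : ℤ) = 0 := by
    rw [Nat.choose_eq_zero_of_lt (lt_of_le_of_lt (pel_le β i0) h)]
    rfl
  exact Finset.prod_eq_zero (Finset.mem_univ i0) h0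

/-! ### Complement transport -/

/-- The complement bijection as an equivalence. -/
def cEquiv (M : Fin k → ℕ) (n' : ℕ) (h : n' ≤ totalM M) :
    Pel M n' ≃ Pel M (totalM M - n') where
  toFun β := ⟨fun i => ⟨M i - (β.1 i : ℕ), by omega⟩, by
    have : ∑ i, (M i - (β.1 i : ℕ)) = (∑ i, M i) - ∑ i, (β.1 i : ℕ) :=
      Finset.sum_tsub_distrib univ (fun i _ => pel_le β i)
    simp only [this, β.2]⟩
  invFun δ := ⟨fun i => ⟨M i - (δ.1 i : ℕ), by omega⟩, by
    have h1 : ∑ i, (M i - (δ.1 i : ℕ)) = (∑ i, M i) - ∑ i, (δ.1 i : ℕ) :=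
      Finset.sum_tsub_distrib univ (fun i _ => pel_le δ i)
    rw [h1, δ.2]
    have ht : totalM M = ∑ i, M i := rfl
    omega⟩
  left_inv β := Subtype.ext (funext fun i => Fin.ext (by
    have := pel_le β i
    show M i - (M i - (β.1 i : ℕ)) = _
    omega))
  right_inv δ := Subtype.ext (funext fun i => Fin.ext (by
    have := pel_le δ i
    show M i - (M i - (δ.1 i : ℕ)) = _
    omega))

lemma transport {M : Fin k → ℕ} {n' d : ℕ} (h : n' ≤ totalM M)
    (htop : Gen M (totalM M - n') d = ⊤) : Gen M n' d = ⊤ := by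
  set n'' := totalM M - n' with hn''
  set e := cEquiv M n' h with he
  have hmap : Submodule.map (LinearMap.funLeft ℤ ℤ e) (Gen M n'' d) ≤ Gen M n' d := by
    rw [Gen, Submodule.map_span]
    refine Submodule.span_le.2 ?_
    rintro _ ⟨g, ⟨γ, hγ, rfl⟩, rfl⟩
    by_cases hbig : ∀ i, γ i ≤ M i
    · have hfun : (LinearMap.funLeft ℤ ℤ e) (gen M n'' γ)
          = ∑ p ∈ Fintype.piFinset (fun i => Finset.range (γ i + 1)),
              (∏ i, ((-1:ℤ)^(p i) * (((M i - p i).choose (γ i - p i) : ℕ) : ℤ)))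
                • gen M n' p := by
        funext β
        rw [LinearMap.funLeft_apply]
        have hval : ∀ i, ((e β).1 i : ℕ) = M i - (β.1 i : ℕ) := fun i => rfl
        have hstep : gen M n'' γ (e β)
            = ∏ i, ∑ t ∈ range (γ i + 1),
                ((-1 : ℤ) ^ t * (((M i - t).choose (γ i - t) : ℕ) : ℤ))
                  * (((β.1 i : ℕ).choose t : ℕ) : ℤ) := by
          rw [gen]
          refine Finset.prod_congr rfl fun i _ => ?_
          rw [hval i]
          exact compl_expand (γ i) (M i) (β.1 i : ℕ) (hbig i) (pel_le β i)
        rw [hstep, Finset.prod_univ_sum]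
        rw [Finset.sum_apply]
        refine Finset.sum_congr rfl fun p _ => ?_
        rw [Pi.smul_apply, smul_eq_mul, gen, ← Finset.prod_mul_distrib]
      rw [hfun]
      refine Submodule.sum_mem _ fun p hp => Submodule.smul_mem _ _ (gen_mem ?_)
      rw [Fintype.mem_piFinset] at hp
      refine le_trans (Finset.sum_le_sum fun i _ => ?_) hγ
      have := hp i
      rw [Finset.mem_range] at this
      omega
    · push_neg at hbig
      obtain ⟨i0, hi0⟩ := hbig
      rw [gen_zero_of_big i0 hi0, map_zero]
      exact Submodule.zero_mem _
  have hsurj : Function.Surjective (LinearMap.funLeft ℤ ℤ (e : Pel M n' → Pel M n'')) :=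
    LinearMap.funLeft_surjective_of_injective _ _ _ e.injective
  rw [eq_top_iff]
  intro g _
  obtain ⟨g', rfl⟩ := hsurj g
  exact hmap ⟨g', htop ▸ Submodule.mem_top, rfl⟩


/-! ### Lift along the `+e_{i0}` embedding -/

lemma sum_split (f : Fin k → ℕ) (i0 : Fin k) :
    ∑ i, f i = f i0 + ∑ i ∈ ({i0}ᶜ : Finset (Fin k)), f i :=
  Fintype.sum_eq_add_sum_compl i0 f

/-- The embedding `Pel M⁻ r → Pel M (r+1)` adding `1` in coordinate `i0`. -/
def embA {M : Fin k → ℕ} (i0 : Fin k) (hM : 1 ≤ M i0) {r : ℕ}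
    (δ : Pel (Function.update M i0 (M i0 - 1)) r) : Pel M (r + 1) :=
  ⟨fun i => ⟨(δ.1 i : ℕ) + (if i = i0 then 1 else 0), by
    have hb := pel_le δ i
    rcases eq_or_ne i i0 with rfl | hne
    · have h1 : Function.update M i (M i - 1) i = M i - 1 := Function.update_self i (M i - 1) M
      have h2 : (if i = i then (1:ℕ) else 0) = 1 := if_pos rfl
      omega
    · have h1 : Function.update M i0 (M i0 - 1) i = M i := Function.update_of_ne hne (M i0 - 1) M
      have h2 : (if i = i0 then (1:ℕ) else 0) = 0 := if_neg hne
      omega⟩, by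
    have h1 : ∑ i, ((δ.1 i : ℕ) + (if i = i0 then 1 else 0))
        = (∑ i, (δ.1 i : ℕ)) + ∑ i, (if i = i0 then 1 else 0) :=
      Finset.sum_add_distrib
    have h2 : ∑ i, (if i = i0 then 1 else 0) = 1 := by
      rw [Finset.sum_ite_eq' univ i0 (fun _ => 1)]
      simp
    show ∑ i, ((δ.1 i : ℕ) + (if i = i0 then 1 else 0)) = r + 1
    rw [h1, h2, δ.2]⟩

lemma embA_val {M : Fin k → ℕ} (i0 : Fin k) (hM : 1 ≤ M i0) {r : ℕ}
    (δ : Pel (Function.update M i0 (M i0 - 1)) r) (i : Fin k) :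
    ((embA i0 hM δ).1 i : ℕ) = (δ.1 i : ℕ) + (if i = i0 then 1 else 0) := rfl

lemma embA_surj {M : Fin k → ℕ} (i0 : Fin k) (hM : 1 ≤ M i0) {r : ℕ}
    (β : Pel M (r + 1)) (hβ : (β.1 i0 : ℕ) ≠ 0) :
    ∃ δ, embA i0 hM δ = β := by
  refine ⟨⟨fun i => ⟨(β.1 i : ℕ) - (if i = i0 then 1 else 0), ?_⟩, ?_⟩, ?_⟩
  · have hb := pel_le β i
    rcases eq_or_ne i i0 with rfl | hne
    · have h1 : Function.update M i (M i - 1) i = M i - 1 := Function.update_self i (M i - 1) M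
      have h2 : (if i = i then (1:ℕ) else 0) = 1 := if_pos rfl
      omega
    · have h1 : Function.update M i0 (M i0 - 1) i = M i := Function.update_of_ne hne (M i0 - 1) M
      have h2 : (if i = i0 then (1:ℕ) else 0) = 0 := if_neg hne
      omega
  · have hsum : ∑ i, ((β.1 i : ℕ) - (if i = i0 then 1 else 0))
        = (∑ i, (β.1 i : ℕ)) - ∑ i, (if i = i0 then 1 else 0) := by
      refine Finset.sum_tsub_distrib univ fun i _ => ?_
      rcases eq_or_ne i i0 with rfl | hne
      · have h2 : (if i = i then (1:ℕ) else 0) = 1 := if_pos rfl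
        have hb := pel_le β i
        omega
      · have h2 : (if i = i0 then (1:ℕ) else 0) = 0 := if_neg hne
        omega
    have h2 : ∑ i, (if i = i0 then 1 else 0) = 1 := by
      rw [Finset.sum_ite_eq' univ i0 (fun _ => 1)]
      simp
    show ∑ i, ((β.1 i : ℕ) - (if i = i0 then 1 else 0)) = r
    rw [hsum, β.2, h2]
    omega
  · refine Subtype.ext (funext fun i => Fin.ext ?_)
    rw [embA_val]
    show (β.1 i : ℕ) - (if i = i0 then 1 else 0) + (if i = i0 then 1 else 0) = (β.1 i : ℕ)
    rcases eq_or_ne i i0 with rfl | hne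
    · have h2 : (if i = i then (1:ℕ) else 0) = 1 := if_pos rfl
      omega
    · have h2 : (if i = i0 then (1:ℕ) else 0) = 0 := if_neg hne
      omega

lemma liftA {M : Fin k → ℕ} {i0 : Fin k} (hM : 1 ≤ M i0) {r d : ℕ} :
    Gen (Function.update M i0 (M i0 - 1)) r d ≤
      Submodule.map (LinearMap.funLeft ℤ ℤ (embA i0 hM (r := r))) (Gen M (r+1) d) := by
  refine Submodule.span_le.2 ?_
  rintro _ ⟨γ, hγ, rfl⟩
  refine ⟨∑ t ∈ range (γ i0 + 1),
      ((-1 : ℤ) ^ (γ i0 - t)) • gen M (r+1) (Function.update γ i0 t), ?_, ?_⟩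
  · refine Submodule.sum_mem _ fun t ht => Submodule.smul_mem _ _ (gen_mem ?_)
    rw [Finset.mem_range] at ht
    have h1 : ∑ i, Function.update γ i0 t i
        = t + ∑ i ∈ ({i0}ᶜ : Finset (Fin k)), γ i := by
      rw [sum_split (Function.update γ i0 t) i0, Function.update_self]
      congr 1
      refine Finset.sum_congr rfl fun i hi => ?_
      rw [Finset.mem_compl, Finset.mem_singleton] at hi
      rw [Function.update_of_ne hi]
    have h2 := sum_split γ i0
    omega
  · funext δ
    rw [LinearMap.funLeft_apply, Finset.sum_apply]
    have hterm : ∀ t ∈ range (γ i0 + 1),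
        (((-1 : ℤ) ^ (γ i0 - t)) • gen M (r+1) (Function.update γ i0 t)) (embA i0 hM δ)
        = ((-1 : ℤ) ^ (γ i0 - t) * ((((δ.1 i0 : ℕ) + 1).choose t : ℕ) : ℤ))
            * ∏ i ∈ ({i0}ᶜ : Finset (Fin k)), ((((δ.1 i : ℕ)).choose (γ i) : ℕ) : ℤ) := by
      intro t _
      rw [Pi.smul_apply, smul_eq_mul, gen]
      rw [Fintype.prod_eq_mul_prod_compl i0]
      have hat : (((((embA i0 hM δ).1 i0 : ℕ)).choose (Function.update γ i0 t i0) : ℕ) : ℤ)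
          = ((((δ.1 i0 : ℕ) + 1).choose t : ℕ) : ℤ) := by
        rw [embA_val, Function.update_self i0 t γ, if_pos rfl]
      have hrest : ∀ i ∈ ({i0}ᶜ : Finset (Fin k)),
          (((((embA i0 hM δ).1 i : ℕ)).choose (Function.update γ i0 t i) : ℕ) : ℤ)
          = ((((δ.1 i : ℕ)).choose (γ i) : ℕ) : ℤ) := by
        intro i hi
        rw [Finset.mem_compl, Finset.mem_singleton] at hi
        rw [embA_val, Function.update_of_ne hi t γ, if_neg hi, add_zero]
      rw [hat, Finset.prod_congr rfl hrest]
      ring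
    rw [Finset.sum_congr rfl hterm, ← Finset.sum_mul]
    rw [← shift ((δ.1 i0 : ℕ) + 1) (γ i0) (by omega)]
    rw [Nat.add_sub_cancel]
    rw [gen, Fintype.prod_eq_mul_prod_compl i0]

/-! ### Lift from the slice `β i0 = 0` -/

/-- The inclusion `Pel (update M i0 0) n' → Pel M n'`. -/
def embB {M : Fin k → ℕ} (i0 : Fin k) {n' : ℕ}
    (ε : Pel (Function.update M i0 0) n') : Pel M n' :=
  ⟨fun i => ⟨(ε.1 i : ℕ), by
    have hb := pel_le ε i
    rcases eq_or_ne i i0 with rfl | hne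
    · have h1 : Function.update M i 0 i = 0 := Function.update_self i 0 M
      omega
    · have h1 : Function.update M i0 0 i = M i := Function.update_of_ne hne 0 M
      omega⟩, ε.2⟩

lemma embB_val {M : Fin k → ℕ} (i0 : Fin k) {n' : ℕ}
    (ε : Pel (Function.update M i0 0) n') (i : Fin k) :
    ((embB i0 ε).1 i : ℕ) = (ε.1 i : ℕ) := rfl

lemma embB_zero {M : Fin k → ℕ} (i0 : Fin k) {n' : ℕ}
    (ε : Pel (Function.update M i0 0) n') : (ε.1 i0 : ℕ) = 0 := by
  have hb := pel_le ε i0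
  have h1 : Function.update M i0 0 i0 = 0 := Function.update_self i0 0 M
  omega

lemma embB_surj {M : Fin k → ℕ} (i0 : Fin k) {n' : ℕ}
    (β : Pel M n') (hβ : (β.1 i0 : ℕ) = 0) : ∃ ε, embB i0 ε = β := by
  refine ⟨⟨fun i => ⟨(β.1 i : ℕ), ?_⟩, β.2⟩, ?_⟩
  · rcases eq_or_ne i i0 with rfl | hne
    · have h1 : Function.update M i 0 i = 0 := Function.update_self i 0 M
      omega
    · have h1 : Function.update M i0 0 i = M i := Function.update_of_ne hne 0 M
      have := pel_le β i
      omega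
  · exact Subtype.ext (funext fun i => Fin.ext rfl)

lemma liftB {M : Fin k → ℕ} (i0 : Fin k) {n' d : ℕ} :
    ∀ q ∈ Gen (Function.update M i0 0) n' d,
      ∃ H ∈ Gen M n' (d + M i0),
        LinearMap.funLeft ℤ ℤ (embB i0 (n' := n')) H = q ∧
          ∀ β : Pel M n', (β.1 i0 : ℕ) ≠ 0 → H β = 0 := by
  intro q hq
  refine Submodule.span_induction ?_ ?_ ?_ ?_ hq
  · rintro _ ⟨γ, hγ, rfl⟩
    by_cases hγ0 : γ i0 = 0
    · refine ⟨∑ t ∈ range (M i0 + 1), ((-1 : ℤ) ^ t) • gen M n' (Function.update γ i0 t),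
        ?_, ?_, ?_⟩
      · refine Submodule.sum_mem _ fun t ht => Submodule.smul_mem _ _ (gen_mem ?_)
        rw [Finset.mem_range] at ht
        have h1 : ∑ i, Function.update γ i0 t i
            = t + ∑ i ∈ ({i0}ᶜ : Finset (Fin k)), γ i := by
          rw [sum_split (Function.update γ i0 t) i0, Function.update_self]
          congr 1
          refine Finset.sum_congr rfl fun i hi => ?_
          rw [Finset.mem_compl, Finset.mem_singleton] at hi
          rw [Function.update_of_ne hi]
        have h2 := sum_split γ i0
        omega
      · funext ε
        rw [LinearMap.funLeft_apply, Finset.sum_apply]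
        have hterm : ∀ t ∈ range (M i0 + 1),
            (((-1 : ℤ) ^ t) • gen M n' (Function.update γ i0 t)) (embB i0 ε)
            = ((-1 : ℤ) ^ t * (((0 : ℕ).choose t : ℕ) : ℤ))
                * ∏ i ∈ ({i0}ᶜ : Finset (Fin k)), ((((ε.1 i : ℕ)).choose (γ i) : ℕ) : ℤ) := by
          intro t _
          rw [Pi.smul_apply, smul_eq_mul, gen]
          rw [Fintype.prod_eq_mul_prod_compl i0]
          have hat : (((((embB i0 ε).1 i0 : ℕ)).choose (Function.update γ i0 t i0) : ℕ) : ℤ)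
              = (((0 : ℕ).choose t : ℕ) : ℤ) := by
            rw [embB_val, embB_zero, Function.update_self i0 t γ]
          have hrest : ∀ i ∈ ({i0}ᶜ : Finset (Fin k)),
              (((((embB i0 ε).1 i : ℕ)).choose (Function.update γ i0 t i) : ℕ) : ℤ)
              = ((((ε.1 i : ℕ)).choose (γ i) : ℕ) : ℤ) := by
            intro i hi
            rw [Finset.mem_compl, Finset.mem_singleton] at hi
            rw [embB_val, Function.update_of_ne hi t γ]
          rw [hat, Finset.prod_congr rfl hrest]
          ring
        rw [Finset.sum_congr rfl hterm, ← Finset.sum_mul]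
        have halt : ∑ t ∈ range (M i0 + 1), (-1 : ℤ) ^ t * (((0 : ℕ).choose t : ℕ) : ℤ)
            = 1 := by
          rw [alt 0 (M i0) (Nat.zero_le _)]
          simp
        rw [halt, one_mul, gen, Fintype.prod_eq_mul_prod_compl i0]
        rw [embB_zero, hγ0]
        simp
      · intro β hβ
        rw [Finset.sum_apply]
        have hterm : ∀ t ∈ range (M i0 + 1),
            (((-1 : ℤ) ^ t) • gen M n' (Function.update γ i0 t)) β
            = ((-1 : ℤ) ^ t * ((((β.1 i0 : ℕ)).choose t : ℕ) : ℤ))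
                * ∏ i ∈ ({i0}ᶜ : Finset (Fin k)), ((((β.1 i : ℕ)).choose (γ i) : ℕ) : ℤ) := by
          intro t _
          rw [Pi.smul_apply, smul_eq_mul, gen]
          rw [Fintype.prod_eq_mul_prod_compl i0, Function.update_self i0 t γ]
          have hrest : ∀ i ∈ ({i0}ᶜ : Finset (Fin k)),
              ((((β.1 i : ℕ)).choose (Function.update γ i0 t i) : ℕ) : ℤ)
              = ((((β.1 i : ℕ)).choose (γ i) : ℕ) : ℤ) := by
            intro i hi
            rw [Finset.mem_compl, Finset.mem_singleton] at hi
            rw [Function.update_of_ne hi t γ]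
          rw [Finset.prod_congr rfl hrest]
          ring
        rw [Finset.sum_congr rfl hterm, ← Finset.sum_mul]
        rw [alt ((β.1 i0 : ℕ)) (M i0) (pel_le β i0), if_neg hβ, zero_mul]
    · -- `γ i0 ≠ 0`: the generator restricts to the zero function
      refine ⟨0, Submodule.zero_mem _, ?_, fun β _ => rfl⟩
      rw [map_zero]
      funext ε
      have h0 : ((((ε.1 i0 : ℕ)).choose (γ i0) : ℕ) : ℤ) = 0 := by
        rw [embB_zero, Nat.choose_eq_zero_of_lt (by omega)]
        rfl
      rw [gen]
      exact (Finset.prod_eq_zero (Finset.mem_univ i0) h0).symm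
  · exact ⟨0, Submodule.zero_mem _, map_zero _, fun β _ => rfl⟩
  · rintro x y hx hy ⟨H1, hm1, he1, hv1⟩ ⟨H2, hm2, he2, hv2⟩
    exact ⟨H1 + H2, Submodule.add_mem _ hm1 hm2, by rw [map_add, he1, he2],
      fun β hβ => by rw [Pi.add_apply, hv1 β hβ, hv2 β hβ, add_zero]⟩
  · rintro a x hx ⟨H, hm, he, hv⟩
    exact ⟨a • H, Submodule.smul_mem _ _ hm, by rw [map_smul, he],
      fun β hβ => by rw [Pi.smul_apply, hv β hβ, smul_zero]⟩

/-! ### The main spanning theorem SPU -/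

lemma SPU : ∀ (N : ℕ), ∀ {k : ℕ} (M : Fin k → ℕ), totalM M = N →
    ∀ n' : ℕ, N ≤ 2 * n' → n' ≤ N → Gen M n' (N - n') = ⊤ := by
  intro N
  induction N using Nat.strong_induction_on with
  | _ N ih =>
    intro k M hM n' hup hle
    rcases Nat.eq_zero_or_pos N with rfl | hN
    · -- base case `N = 0`
      have hn0 : n' = 0 := by omega
      subst hn0
      rw [Submodule.eq_top_iff']
      intro g
      set β₀ : Pel M 0 := ⟨fun i => ⟨0, Nat.succ_pos _⟩, by simp⟩ with hβ₀
      have hg : g = (g β₀) • gen M 0 (fun _ => 0) := by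
        funext β
        have hβ : β = β₀ := by
          refine Subtype.ext (funext fun i => Fin.ext ?_)
          have := (Finset.sum_eq_zero_iff).mp β.2 i (Finset.mem_univ i)
          simpa [hβ₀] using this
        rw [hβ, Pi.smul_apply, smul_eq_mul]
        have hone : gen M 0 (fun _ => 0) β₀ = 1 := by
          rw [gen]; simp
        rw [hone, mul_one]
      rw [hg]
      exact Submodule.smul_mem _ _ (gen_mem (by simp))
    · -- inductive case `N ≥ 1`
      have hsumne : ∑ i, M i ≠ 0 := by
        have ht2 : totalM M = ∑ i, M i := rfl
        omega
      obtain ⟨i0, -, hi0⟩ := Finset.exists_ne_zero_of_sum_ne_zero hsumne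
      have hMi0 : 1 ≤ M i0 := Nat.one_le_iff_ne_zero.2 hi0
      obtain ⟨r, rfl⟩ : ∃ r, n' = r + 1 := ⟨n' - 1, by omega⟩
      set Mm := Function.update M i0 (M i0 - 1) with hMm
      have htotm : totalM Mm = N - 1 := by
        have h1 : ∑ x ∈ univ, Function.update M i0 (M i0 - 1) x
            = (M i0 - 1) + ∑ x ∈ univ \ {i0}, M x :=
          Finset.sum_update_of_mem (Finset.mem_univ i0) M (M i0 - 1)
        have h2 : ∑ i, M i = M i0 + ∑ i ∈ ({i0}ᶜ : Finset (Fin k)), M i := sum_split M i0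
        have h3 : ({i0}ᶜ : Finset (Fin k)) = univ \ {i0} := Finset.compl_eq_univ_sdiff _
        rw [h3] at h2
        have ht : totalM Mm = ∑ x ∈ univ, Function.update M i0 (M i0 - 1) x := rfl
        have ht2 : totalM M = ∑ i, M i := rfl
        omega
      have hA : Gen Mm r (N - (r+1)) = ⊤ := by
        rcases lt_or_eq_of_le hup with hlt | heq
        · have h4 := ih (N-1) (by omega) Mm htotm r (by omega) (by omega)
          have heq2 : (N-1) - r = N - (r+1) := by omega
          rwa [heq2] at h4
        · have h5 := ih (N-1) (by omega) Mm htotm (r+1) (by omega) (by omega)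
          have h6 : Gen Mm (r+1) (N - (r+1)) = ⊤ :=
            top_unique (h5 ▸ Gen_mono (by omega))
          have h8 : totalM Mm - r = r + 1 := by omega
          refine transport (by omega) ?_
          rw [h8]
          exact h6
      rw [Submodule.eq_top_iff']
      intro g
      have hgA : (LinearMap.funLeft ℤ ℤ (embA i0 hMi0 (r := r))) g
          ∈ Gen Mm r (N - (r+1)) := by
        rw [hA]; exact Submodule.mem_top
      obtain ⟨G1, hG1mem, hG1eq⟩ := liftA hMi0 hgA
      set h := g - G1 with hh
      have hfl : LinearMap.funLeft ℤ ℤ (embA i0 hMi0 (r := r)) h = 0 := by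
        rw [hh, map_sub, hG1eq, sub_self]
      have hvan : ∀ β : Pel M (r+1), (β.1 i0 : ℕ) ≠ 0 → h β = 0 := by
        intro β hβ
        obtain ⟨δ, rfl⟩ := embA_surj i0 hMi0 β hβ
        have hq : h (embA i0 hMi0 δ)
            = (LinearMap.funLeft ℤ ℤ (embA i0 hMi0 (r := r)) h) δ := rfl
        rw [hq, hfl]
        rfl
      by_cases hsl : r + 1 + M i0 ≤ N
      · set M0 := Function.update M i0 0 with hM0
        have htot0 : totalM M0 = N - M i0 := by
          have h1 : ∑ x ∈ univ, Function.update M i0 0 x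
              = 0 + ∑ x ∈ univ \ {i0}, M x :=
            Finset.sum_update_of_mem (Finset.mem_univ i0) M 0
          have h2 : ∑ i, M i = M i0 + ∑ i ∈ ({i0}ᶜ : Finset (Fin k)), M i := sum_split M i0
          have h3 : ({i0}ᶜ : Finset (Fin k)) = univ \ {i0} := Finset.compl_eq_univ_sdiff _
          rw [h3] at h2
          have ht : totalM M0 = ∑ x ∈ univ, Function.update M i0 0 x := rfl
          have ht2 : totalM M = ∑ i, M i := rfl
          omega
        have hB : Gen M0 (r+1) ((N - M i0) - (r+1)) = ⊤ :=
          ih (N - M i0) (by omega) M0 htot0 (r+1) (by omega) (by omega)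
        have hqB : LinearMap.funLeft ℤ ℤ (embB i0 (n' := r+1)) h
            ∈ Gen M0 (r+1) ((N - M i0) - (r+1)) := by
          rw [hB]; exact Submodule.mem_top
        obtain ⟨H, hHmem, hHeq, hHvan⟩ := liftB i0 _ hqB
        have hbud : (N - M i0) - (r+1) + M i0 = N - (r+1) := by omega
        rw [hbud] at hHmem
        have hheq : h = H := by
          funext β
          by_cases hβ0 : (β.1 i0 : ℕ) = 0
          · obtain ⟨ε, rfl⟩ := embB_surj i0 β hβ0
            have e1 : h (embB i0 ε)
                = (LinearMap.funLeft ℤ ℤ (embB i0 (n' := r+1)) h) ε := rfl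
            have e2 : H (embB i0 ε)
                = (LinearMap.funLeft ℤ ℤ (embB i0 (n' := r+1)) H) ε := rfl
            rw [e1, e2, hHeq]
          · rw [hvan β hβ0, hHvan β hβ0]
        have hgdecomp : g = G1 + H := by
          rw [← hheq, hh]
          abel
        rw [hgdecomp]
        exact Submodule.add_mem _ hG1mem hHmem
      · have hall : ∀ β : Pel M (r+1), (β.1 i0 : ℕ) ≠ 0 := by
          intro β h0
          have hs : ∑ i, (β.1 i : ℕ)
              = (β.1 i0 : ℕ) + ∑ i ∈ ({i0}ᶜ : Finset (Fin k)), (β.1 i : ℕ) :=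
            sum_split _ i0
          have hs2 : ∑ i ∈ ({i0}ᶜ : Finset (Fin k)), (β.1 i : ℕ)
              ≤ ∑ i ∈ ({i0}ᶜ : Finset (Fin k)), M i :=
            Finset.sum_le_sum (fun i _ => pel_le β i)
          have hsM : ∑ i, M i = M i0 + ∑ i ∈ ({i0}ᶜ : Finset (Fin k)), M i := sum_split M i0
          have hβs := β.2
          have ht2 : totalM M = ∑ i, M i := rfl
          omega
        have hzero : h = 0 := funext fun β => hvan β (hall β)
        have hgG : g = G1 := by
          have := sub_eq_zero.mp hzero
          exact this
        rw [hgG]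
        exact hG1mem


/-! ### the raising map and the span part -/

def Phi (M : Fin k → ℕ) (j n' : ℕ) : (Pel M j → ℤ) →ₗ[ℤ] (Pel M n' → ℤ) where
  toFun c := fun β => ∑ γ : Pel M j, c γ * ((uEntry M γ β : ℕ) : ℤ)
  map_add' c d := by
    funext β
    simp [add_mul, Finset.sum_add_distrib]
  map_smul' a c := by
    funext β
    simp [Finset.mul_sum, mul_assoc]

lemma Phi_apply (M : Fin k → ℕ) {j n' : ℕ} (c : Pel M j → ℤ) (β : Pel M n') :
    Phi M j n' c β = ∑ γ : Pel M j, c γ * ((uEntry M γ β : ℕ) : ℤ) := rfl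

lemma Phi_single (M : Fin k → ℕ) {j n' : ℕ} (α : Pel M j) :
    Phi M j n' (Pi.single α (1 : ℤ)) = fun β => ((uEntry M α β : ℕ) : ℤ) := by
  funext β
  rw [Phi_apply]
  rw [Finset.sum_eq_single α]
  · rw [Pi.single_eq_same, one_mul]
  · intro γ _ hγ
    rw [Pi.single_eq_of_ne hγ, zero_mul]
  · intro h
    exact absurd (Finset.mem_univ α) h

lemma Phi_bFam (M : Fin k → ℕ) (A : (m : ℕ) → Finset (Pel M m)) {j n n' : ℕ}
    (hjn : j ≤ n) (x : (m : Fin (j + 1)) × {f : Pel M (m : ℕ) // f ∈ A (m : ℕ)}) :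
    Phi M j n' (bFam M A j j x)
      = (((n' - (x.1 : ℕ)).choose (j - (x.1 : ℕ)) : ℕ) : ℤ)
          • bFam M A n n' ⟨Fin.castLE (by omega) x.1, x.2⟩ := by
  funext β
  rw [Phi_apply, Pi.smul_apply]
  simp only [bFam]
  have hkey := key M (m := (x.1 : ℕ)) (j := j) (n' := n') (Fin.is_le x.1) x.2.1 β
  have hcast : ∑ γ : Pel M j, ((uEntry M x.2.1 γ : ℕ) : ℤ) * ((uEntry M γ β : ℕ) : ℤ)
      = (((∑ γ : Pel M j, uEntry M x.2.1 γ * uEntry M γ β : ℕ) : ℕ) : ℤ) := by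
    push_cast
    rfl
  rw [hcast, hkey, smul_eq_mul]
  push_cast
  ring

lemma span_top (M : Fin k → ℕ) (A : (m : ℕ) → Finset (Pel M m))
    (hbasis : ∀ n : ℕ, 2 * n ≤ totalM M →
      Submodule.span ℤ (Set.range (bFam M A n n)) = ⊤)
    {n' : ℕ} (h2 : totalM M ≤ 2 * n') (hle : n' ≤ totalM M) :
    Submodule.span ℤ (Set.range (bFam M A (totalM M - n') n')) = ⊤ := by
  set n := totalM M - n' with hn
  have hGen : Gen M n' n = ⊤ := SPU (totalM M) M rfl n' h2 hle
  rw [eq_top_iff, ← hGen, Gen]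
  refine Submodule.span_le.2 ?_
  rintro _ ⟨γ, hγ, rfl⟩
  by_cases hbig : ∀ i, γ i ≤ M i
  · set j := ∑ i, γ i with hj
    have hnn' : n ≤ n' := by omega
    have hj2 : 2 * j ≤ totalM M := by omega
    set α : Pel M j := ⟨fun i => ⟨γ i, Nat.lt_succ_of_le (hbig i)⟩, rfl⟩ with hα
    have hgen_eq : gen M n' γ = Phi M j n' (Pi.single α 1) := by
      rw [Phi_single]
      funext β
      rw [gen, uEntry]
      push_cast
      rfl
    rw [hgen_eq]
    have hmem : (Pi.single α (1 : ℤ)) ∈ Submodule.span ℤ (Set.range (bFam M A j j)) := by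
      rw [hbasis j hj2]
      trivial
    have hmem2 : Phi M j n' (Pi.single α (1 : ℤ))
        ∈ Submodule.map (Phi M j n') (Submodule.span ℤ (Set.range (bFam M A j j))) :=
      ⟨_, hmem, rfl⟩
    rw [Submodule.map_span] at hmem2
    refine Submodule.span_le.2 ?_ hmem2
    rintro _ ⟨_, ⟨x, rfl⟩, rfl⟩
    have hjn : j ≤ n := hγ
    rw [Phi_bFam M A hjn x]
    exact Submodule.smul_mem _ _ (Submodule.subset_span ⟨_, rfl⟩)
  · push_neg at hbig
    obtain ⟨i0, hi0⟩ := hbig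
    rw [gen_zero_of_big i0 hi0]
    exact Submodule.zero_mem _

/-! ### cardinality -/

lemma telescope (M : Fin k → ℕ) (A : (m : ℕ) → Finset (Pel M m))
    (hcard : ∀ m : ℕ, 2 * m ≤ totalM M →
      (A m).card + prevP M m = Fintype.card (Pel M m)) :
    ∀ n : ℕ, 2 * n ≤ totalM M →
      ∑ m ∈ range (n + 1), (A m).card = Fintype.card (Pel M n) := by
  intro n
  induction n with
  | zero =>
    intro h
    rw [Finset.sum_range_one]
    have := hcard 0 (by omega)
    simpa [prevP] using this
  | succ n ih =>
    intro h
    rw [Finset.sum_range_succ, ih (by omega)]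
    have h1 := hcard (n + 1) h
    rw [show prevP M (n + 1) = Fintype.card (Pel M n) from rfl] at h1
    omega

lemma card_index (M : Fin k → ℕ) (A : (m : ℕ) → Finset (Pel M m)) (n : ℕ) :
    Fintype.card ((m : Fin (n + 1)) × {f : Pel M (m : ℕ) // f ∈ A (m : ℕ)})
      = ∑ m ∈ range (n + 1), (A m).card := by
  rw [Fintype.card_sigma]
  rw [← Fin.sum_univ_eq_sum_range (fun m => (A m).card) (n + 1)]
  exact Finset.sum_congr rfl fun m _ => Fintype.card_coe (A (m : ℕ))

/-! ### linear independence from spanning plus cardinality -/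

lemma li_of_span {X Y : Type*} [Fintype X] [Fintype Y] [DecidableEq X]
    (v : X → (Y → ℤ)) (hcard : Fintype.card X = Fintype.card Y)
    (hspan : Submodule.span ℤ (Set.range v) = ⊤) : LinearIndependent ℤ v := by
  let G : (X → ℤ) →ₗ[ℤ] (Y → ℤ) := Fintype.linearCombination ℤ v
  have hGapp : ∀ c, G c = ∑ i, c i • v i := fun c => rfl
  have hsurj : Function.Surjective G := by
    intro y
    have hy : y ∈ Submodule.span ℤ (Set.range v) := by rw [hspan]; trivial
    obtain ⟨c, hc⟩ := (Submodule.mem_span_range_iff_exists_fun ℤ).1 hy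
    exact ⟨c, by rw [hGapp]; exact hc⟩
  obtain ⟨e⟩ : Nonempty (Y ≃ X) := ⟨Fintype.equivOfCardEq hcard.symm⟩
  let E : (X → ℤ) ≃ₗ[ℤ] (Y → ℤ) := LinearEquiv.funCongrLeft ℤ ℤ e
  have hend : Function.Surjective ((G ∘ₗ E.symm.toLinearMap) : (Y → ℤ) →ₗ[ℤ] (Y → ℤ)) := by
    intro y
    obtain ⟨c, hc⟩ := hsurj y
    exact ⟨E c, by simpa using hc⟩
  have hendinj : Function.Injective ((G ∘ₗ E.symm.toLinearMap) : (Y → ℤ) →ₗ[ℤ] (Y → ℤ)) :=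
    OrzechProperty.injective_of_surjective_endomorphism _ hend
  have hinj : Function.Injective G := by
    intro a b hab
    have : (G ∘ₗ E.symm.toLinearMap) (E a) = (G ∘ₗ E.symm.toLinearMap) (E b) := by
      simpa using hab
    have := hendinj this
    exact E.injective this
  rw [Fintype.linearIndependent_iff]
  intro g hg
  have hGg : G g = 0 := by rw [hGapp]; exact hg
  have hg0 : g = 0 := hinj (by rw [hGg, map_zero])
  intro i
  rw [hg0]
  rfl


end IBU

/-- Suppose `A m ⊆ P_m^M` (for `0 ≤ m ≤ |M|/2`) satisfy `#(A m) = p_m - p_{m-1}` and,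
for every `n` with `2n ≤ |M|`, the family `⋃_{m ≤ n} (U_M^(n-m)/(n-m)!) '' (A m)` is a
`ℤ`-basis of `ℤP_n^M`.  Then for every `n'` with `|M|/2 ≤ n' ≤ |M|`, the family
`B_{n'} = ⋃_{m ≤ |M| - n'} (U_M^(n'-m)/(n'-m)!) '' (A m)` is a `ℤ`-basis of
`ℤP_{n'}^M`. -/
theorem integral_basis_upper {k : ℕ} (hk : 1 ≤ k) (M : Fin k → ℕ)
    (A : (m : ℕ) → Finset (Pel M m))
    (hcard : ∀ m : ℕ, 2 * m ≤ totalM M →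
      (A m).card + prevP M m = Fintype.card (Pel M m))
    (hbasis : ∀ n : ℕ, 2 * n ≤ totalM M →
      LinearIndependent ℤ (bFam M A n n) ∧
      Submodule.span ℤ (Set.range (bFam M A n n)) = ⊤) :
    ∀ n' : ℕ, totalM M ≤ 2 * n' → n' ≤ totalM M →
      LinearIndependent ℤ (bFam M A (totalM M - n') n') ∧
      Submodule.span ℤ (Set.range (bFam M A (totalM M - n') n')) = ⊤ := by
  intro n' h2 hle
  have hspan : Submodule.span ℤ (Set.range (bFam M A (totalM M - n') n')) = ⊤ :=
    IBU.span_top M A (fun n hn => (hbasis n hn).2) h2 hle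
  have hcardX : Fintype.card
        ((m : Fin (totalM M - n' + 1)) × {f : Pel M (m : ℕ) // f ∈ A (m : ℕ)})
      = Fintype.card (Pel M n') := by
    rw [IBU.card_index M A (totalM M - n')]
    rw [IBU.telescope M A hcard (totalM M - n') (by omega)]
    exact Fintype.card_congr (IBU.cEquiv M n' hle).symm
  exact ⟨IBU.li_of_span _ hcardX hspan, hspan⟩
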